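/- arXiv:1810.01806 — 2 statements merged into one kernel-verified Lean document; each statement's English description precedes it below -/
import Mathlib

section
/- For α > 0 and any real λ, the derivative of x ↦ E_{α,1}(λ x^α) on (0,∞) equals λ x^{α−1} E_{α,α}(λ x^α). -/
open Filter Real

/-- Log-convexity lower bound: `Γ(a) (a-1)^α ≤ Γ(a+α)` for `a ≥ 2`, `α > 0`. -/
lemma gamma_mul_rpow_le (α a : ℝ) (hα : 0 < α) (ha : 2 ≤ a) :
    Real.Gamma a * (a - 1) ^ α ≤ Real.Gamma (a + α) := by
  have h0 : (0:ℝ) < a - 1 := by linarith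
  have hpa : (0:ℝ) < a := by linarith
  have hpaα : (0:ℝ) < a + α := by linarith
  have hs := Real.convexOn_log_Gamma.slope_mono_adjacent
      (show a - 1 ∈ Set.Ioi (0:ℝ) from h0) (show a + α ∈ Set.Ioi (0:ℝ) from hpaα)
      (by linarith : a - 1 < a) (by linarith : a < a + α)
  simp only [Function.comp_apply] at hs
  have hΓ1 : Real.Gamma a = (a - 1) * Real.Gamma (a - 1) := by
    have := Real.Gamma_add_one (s := a - 1) h0.ne'
    rw [sub_add_cancel] at this
    exact this
  have hlog : Real.log (Real.Gamma a) - Real.log (Real.Gamma (a - 1)) = Real.log (a - 1) := by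
    rw [hΓ1, Real.log_mul h0.ne' (Real.Gamma_pos_of_pos h0).ne']
    ring
  rw [show a - (a - 1) = 1 by ring, show a + α - a = α by ring, div_one, hlog] at hs
  have key : Real.log (Real.Gamma a) + α * Real.log (a - 1) ≤ Real.log (Real.Gamma (a + α)) := by
    have h2 := (le_div_iff₀ hα).mp hs
    linarith
  calc Real.Gamma a * (a - 1) ^ α
      = Real.exp (Real.log (Real.Gamma a) + α * Real.log (a - 1)) := by
        rw [Real.exp_add, Real.exp_log (Real.Gamma_pos_of_pos hpa),
          Real.rpow_def_of_pos h0, mul_comm α]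
    _ ≤ Real.exp (Real.log (Real.Gamma (a + α))) := Real.exp_le_exp.2 key
    _ = Real.Gamma (a + α) := Real.exp_log (Real.Gamma_pos_of_pos hpaα)

/-- Ratio-test summability for Mittag-Leffler-type series with a linear factor. -/
lemma summable_ml (α β c : ℝ) (hα : 0 < α) :
    Summable (fun n : ℕ => ((n : ℝ) + 1) * c ^ n / Real.Gamma (α * n + β)) := by
  apply summable_of_ratio_norm_eventually_le (r := 1/2) (by norm_num)
  have htend : Tendsto (fun n : ℕ => α * n + β) atTop atTop :=
    tendsto_atTop_add_const_right _ β ((tendsto_natCast_atTop_atTop).const_mul_atTop hα)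
  have h2 : ∀ᶠ n : ℕ in atTop, 2 ≤ α * n + β := htend.eventually_ge_atTop 2
  have h3 : ∀ᶠ n : ℕ in atTop, 4 * |c| ≤ (α * n + β - 1) ^ α := by
    have : Tendsto (fun n : ℕ => (α * n + β - 1) ^ α) atTop atTop :=
      (tendsto_rpow_atTop hα).comp (tendsto_atTop_add_const_right _ (-1) htend)
    simpa using this.eventually_ge_atTop (4 * |c|)
  filter_upwards [h2, h3] with n ha hb
  set a := α * (n : ℝ) + β with ha_def
  have ha1 : (0:ℝ) < a - 1 := by linarith
  have hΓa : 0 < Real.Gamma a := Real.Gamma_pos_of_pos (by linarith)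
  have hΓaα : 0 < Real.Gamma (a + α) := Real.Gamma_pos_of_pos (by linarith)
  have hrp : (0:ℝ) < (a - 1) ^ α := Real.rpow_pos_of_pos ha1 α
  have hkey := gamma_mul_rpow_le α a hα ha
  have harg : α * ((n : ℕ) + 1 : ℕ) + β = a + α := by push_cast; ring
  rw [harg]
  have hnorm1 : ‖((((n:ℕ) + 1 : ℕ) : ℝ) + 1) * c ^ (n + 1) / Real.Gamma (a + α)‖
      = ((n : ℝ) + 2) * |c| ^ (n + 1) / Real.Gamma (a + α) := by
    rw [norm_div, norm_mul, norm_pow, Real.norm_eq_abs, Real.norm_eq_abs, Real.norm_eq_abs,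
      abs_of_pos hΓaα]
    push_cast
    rw [abs_of_nonneg (by positivity : (0:ℝ) ≤ (n:ℝ) + 1 + 1)]
    ring_nf
  have hnorm2 : ‖(((n:ℕ) : ℝ) + 1) * c ^ n / Real.Gamma a‖
      = ((n : ℝ) + 1) * |c| ^ n / Real.Gamma a := by
    rw [norm_div, norm_mul, norm_pow, Real.norm_eq_abs, Real.norm_eq_abs, Real.norm_eq_abs,
      abs_of_pos hΓa, abs_of_nonneg (by positivity : (0:ℝ) ≤ (n:ℝ) + 1)]
  rw [hnorm1, hnorm2]
  rw [show (1/2:ℝ) * (((n:ℝ) + 1) * |c| ^ n / Real.Gamma a)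
      = (1/2 * (((n:ℝ) + 1) * |c| ^ n)) / Real.Gamma a by ring,
    div_le_div_iff₀ hΓaα hΓa]
  have hcpow : (0:ℝ) ≤ |c| ^ n := by positivity
  have hstep : ((n : ℝ) + 2) * |c| ^ (n + 1) * Real.Gamma a
      ≤ (1/2 * (((n : ℝ) + 1) * |c| ^ n) * (Real.Gamma a * (a - 1) ^ α)) := by
    rw [pow_succ]
    nlinarith [mul_nonneg (by positivity : (0:ℝ) ≤ ((n:ℝ) + 1) * |c| ^ n * Real.Gamma a)
        (by linarith : (0:ℝ) ≤ (a - 1) ^ α - 4 * |c|),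
      mul_nonneg (mul_nonneg (Nat.cast_nonneg n : (0:ℝ) ≤ (n:ℝ))
        (mul_nonneg hcpow (abs_nonneg c))) hΓa.le]
  calc ((n : ℝ) + 2) * |c| ^ (n + 1) * Real.Gamma a
      ≤ 1/2 * (((n : ℝ) + 1) * |c| ^ n) * (Real.Gamma a * (a - 1) ^ α) := hstep
    _ ≤ 1/2 * (((n : ℝ) + 1) * |c| ^ n) * Real.Gamma (a + α) := by
        apply mul_le_mul_of_nonneg_left hkey
        positivity


/-- Summability of the derivative-bound series. -/
lemma summable_ml' (α c D : ℝ) (hα : 0 < α) :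
    Summable (fun n : ℕ => (n : ℝ) * c ^ (n - 1) * D / Real.Gamma (α * n + 1)) := by
  rw [← summable_nat_add_iff 1]
  refine ((summable_ml α (α + 1) c hα).mul_right D).congr fun n => ?_
  have h1 : α * ((n : ℝ) + 1) + 1 = α * n + (α + 1) := by ring
  push_cast
  rw [h1]
  ring

/-- Two-parameter Mittag-Leffler function (with the `1/Γ = 0` convention at poles,
automatic since `Real.Gamma` vanishes at nonpositive integers). -/
noncomputable def mittagLeffler (α β z : ℝ) : ℝ :=
  ∑' k : ℕ, z ^ k / Real.Gamma (α * k + β)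

theorem deriv_mittagLeffler_one (α lam : ℝ) (hα : 0 < α) (x : ℝ) (hx : 0 < x) :
    HasDerivAt (fun x : ℝ => mittagLeffler α 1 (lam * x ^ α))
      (lam * x ^ (α - 1) * mittagLeffler α α (lam * x ^ α)) x := by
  have hx2 : 0 < x / 2 := by linarith
  set c : ℝ := |lam| * (x + 1) ^ α with hc_def
  set K : ℝ := max ((x / 2) ^ (α - 1)) ((x + 1) ^ (α - 1)) with hK_def
  set g : ℕ → ℝ → ℝ := fun n y => (lam * y ^ α) ^ n / Real.Gamma (α * n + 1) with hg_def
  set g' : ℕ → ℝ → ℝ := fun n y =>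
    ((n : ℝ) * (lam * y ^ α) ^ (n - 1) * (lam * (α * y ^ (α - 1)))) / Real.Gamma (α * n + 1)
    with hg'_def
  set u : ℕ → ℝ := fun n => (n : ℝ) * c ^ (n - 1) * (|lam| * (α * K)) / Real.Gamma (α * n + 1)
    with hu_def
  have hu : Summable u := summable_ml' α c (|lam| * (α * K)) hα
  have hxt : x ∈ Set.Ioo (x / 2) (x + 1) := ⟨by linarith, by linarith⟩
  have hΓpos : ∀ n : ℕ, 0 < Real.Gamma (α * n + 1) := fun n =>
    Real.Gamma_pos_of_pos (by positivity)
  have hg0 : Summable fun n => g n x := by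
    refine Summable.of_norm_bounded
      (g := fun n => ((n : ℝ) + 1) * |lam * x ^ α| ^ n / Real.Gamma (α * n + 1))
      (summable_ml α 1 |lam * x ^ α| hα) fun n => ?_
    simp only [hg_def]
    rw [norm_div, norm_pow, Real.norm_eq_abs, Real.norm_eq_abs, abs_of_pos (hΓpos n)]
    gcongr
    exact le_mul_of_one_le_left (by positivity)
      (by exact_mod_cast Nat.succ_le_succ (Nat.zero_le n))
  have hg : ∀ n : ℕ, ∀ y ∈ Set.Ioo (x / 2) (x + 1), HasDerivAt (g n) (g' n y) y := by
    intro n y hy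
    have hy0 : 0 < y := lt_trans hx2 hy.1
    have hin : HasDerivAt (fun y : ℝ => lam * y ^ α) (lam * (α * y ^ (α - 1))) y :=
      (Real.hasDerivAt_rpow_const (Or.inl hy0.ne')).const_mul lam
    exact (hin.pow n).div_const _
  have hg' : ∀ n : ℕ, ∀ y ∈ Set.Ioo (x / 2) (x + 1), ‖g' n y‖ ≤ u n := by
    intro n y hy
    have hy0 : 0 < y := lt_trans hx2 hy.1
    have hb1 : |lam * y ^ α| ≤ c := by
      rw [hc_def, abs_mul, abs_of_nonneg (Real.rpow_nonneg hy0.le α)]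
      exact mul_le_mul_of_nonneg_left
        (Real.rpow_le_rpow hy0.le (le_of_lt hy.2) hα.le) (abs_nonneg lam)
    have hb2 : y ^ (α - 1) ≤ K := by
      rcases le_total 0 (α - 1) with h | h
      · exact le_trans (Real.rpow_le_rpow hy0.le (le_of_lt hy.2) h) (le_max_right _ _)
      · exact le_trans (Real.rpow_le_rpow_of_nonpos hx2 (le_of_lt hy.1) h) (le_max_left _ _)
    have hK0 : 0 ≤ K := le_trans (Real.rpow_nonneg hy0.le (α - 1)) hb2
    simp only [hg'_def, hu_def]
    rw [norm_div, Real.norm_eq_abs, Real.norm_eq_abs, abs_of_pos (hΓpos n), abs_mul, abs_mul,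
      abs_mul, abs_mul, abs_pow, Nat.abs_cast, abs_of_pos hα,
      abs_of_nonneg (Real.rpow_nonneg hy0.le (α - 1))]
    gcongr
  have hD := hasDerivAt_tsum_of_isPreconnected hu isOpen_Ioo isPreconnected_Ioo
    hg hg' hxt hg0 hxt
  set e : ℝ := lam * x ^ α with he_def
  set q : ℕ → ℝ := fun n => (n : ℝ) * e ^ (n - 1) * α / Real.Gamma (α * n + 1) with hq_def
  have hqsum : Summable q := summable_ml' α e α hα
  have hterm : ∀ n : ℕ, q (n + 1) = e ^ n / Real.Gamma (α * n + α) := by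
    intro n
    have hpos : (0 : ℝ) < α * n + α := by positivity
    have hΓ : Real.Gamma (α * ((n : ℕ) + 1 : ℕ) + 1) = (α * n + α) * Real.Gamma (α * n + α) := by
      push_cast
      rw [show α * ((n : ℝ) + 1) + 1 = (α * n + α) + 1 by ring, Real.Gamma_add_one hpos.ne']
    simp only [hq_def, hΓ, Nat.add_sub_cancel]
    have hΓpos' : 0 < Real.Gamma (α * n + α) := Real.Gamma_pos_of_pos hpos
    push_cast
    field_simp
  have hsum_eq : (∑' n, g' n x) = lam * x ^ (α - 1) * mittagLeffler α α e := by
    have h1 : ∀ n : ℕ, g' n x = lam * x ^ (α - 1) * q n := by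
      intro n; simp only [hg'_def, hq_def, he_def]; ring
    rw [tsum_congr h1, tsum_mul_left]
    congr 1
    rw [Summable.tsum_eq_zero_add hqsum]
    simp only [hq_def, Nat.cast_zero, zero_mul, zero_div, zero_add]
    rw [tsum_congr hterm]
    rfl
  rw [hsum_eq] at hD
  exact hD
end

section
/- For α > 0 and k ∈ ℝ with k ≠ 1 (more precisely, whenever the formula's Gamma values make sense), the derivative of z ↦ z^{k−1} E_{α,k}(λ z^α) on (0,∞) equals z^{k−2} E_{α,k−1}(λ z^α). -/
open Real Filter Set

/-- Key Gamma-function identity, valid with the junk-value conventions. -/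
lemma gammaRatio (x : ℝ) : (x - 1) / Real.Gamma x = 1 / Real.Gamma (x - 1) := by
  by_cases h1 : x - 1 = 0
  · rw [h1, Real.Gamma_zero]
    simp [show x = 1 by linarith [h1]]
  · have hrec : Real.Gamma x = (x - 1) * Real.Gamma (x - 1) := by
      have := Real.Gamma_add_one h1
      rwa [sub_add_cancel] at this
    by_cases h2 : Real.Gamma (x - 1) = 0
    · rw [hrec, h2, mul_zero, div_zero, div_zero]
    · rw [hrec, div_mul_eq_div_div, div_self h1]

/-- Lower bound for the Gamma function from log-convexity. -/
lemma gamma_lower (α x : ℝ) (hα : 0 < α) (hx : 2 ≤ x) :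
    (x - 1) ^ α * Real.Gamma x ≤ Real.Gamma (x + α) := by
  have h0 : (0 : ℝ) < x - 1 := by linarith
  have hx0 : (0 : ℝ) < x := by linarith
  have hxa0 : (0 : ℝ) < x + α := by linarith
  have hΓ1 : 0 < Real.Gamma (x - 1) := Real.Gamma_pos_of_pos h0
  have hΓx : 0 < Real.Gamma x := Real.Gamma_pos_of_pos hx0
  have hΓxa : 0 < Real.Gamma (x + α) := Real.Gamma_pos_of_pos hxa0
  have hs := Real.convexOn_log_Gamma.slope_mono_adjacent (x := x - 1) (y := x)
    (z := x + α) (Set.mem_Ioi.mpr h0) (Set.mem_Ioi.mpr hxa0) (by linarith) (by linarith)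
  simp only [Function.comp_apply] at hs
  have hrec : Real.Gamma x = (x - 1) * Real.Gamma (x - 1) := by
    have := Real.Gamma_add_one (ne_of_gt h0)
    rwa [sub_add_cancel] at this
  have hlog : Real.log (Real.Gamma x) - Real.log (Real.Gamma (x - 1)) = Real.log (x - 1) := by
    rw [hrec, Real.log_mul (ne_of_gt h0) (ne_of_gt hΓ1)]; ring
  have h1 : x - (x - 1) = 1 := by ring
  have h2 : x + α - x = α := by ring
  rw [h1, h2, div_one] at hs
  rw [hlog] at hs
  have hkey : α * Real.log (x - 1) + Real.log (Real.Gamma x) ≤ Real.log (Real.Gamma (x + α)) := by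
    rw [le_div_iff₀ hα] at hs
    nlinarith
  have := Real.exp_le_exp.mpr hkey
  rw [Real.exp_add, Real.exp_log hΓx, Real.exp_log hΓxa] at this
  rwa [Real.rpow_def_of_pos h0, mul_comm (Real.log (x - 1)) α] at *

/-- The Mittag-Leffler-type series is summable, with any geometric weight. -/
lemma summable_aux (α β r : ℝ) (hα : 0 < α) (hr : 0 ≤ r) :
    Summable (fun n : ℕ => r ^ n / |Real.Gamma (α * n + β)|) := by
  apply summable_of_ratio_norm_eventually_le (r := 1 / 2) (by norm_num)
  have htend : Tendsto (fun n : ℕ => α * n + β) atTop atTop := by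
    apply Filter.tendsto_atTop_add_const_right
    exact Tendsto.const_mul_atTop hα tendsto_natCast_atTop_atTop
  filter_upwards [htend.eventually_ge_atTop (max 2 (1 + (2 * r + 1) ^ α⁻¹))] with n hn
  set x := α * n + β with hx
  have hx2 : 2 ≤ x := le_trans (le_max_left _ _) hn
  have hxr : 1 + (2 * r + 1) ^ α⁻¹ ≤ x := le_trans (le_max_right _ _) hn
  have hΓx : 0 < Real.Gamma x := Real.Gamma_pos_of_pos (by linarith)
  have hΓxa : 0 < Real.Gamma (x + α) := Real.Gamma_pos_of_pos (by linarith)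
  have hpow : 2 * r + 1 ≤ (x - 1) ^ α := by
    have h1 : (2 * r + 1) ^ α⁻¹ ≤ x - 1 := by linarith
    calc 2 * r + 1 = ((2 * r + 1) ^ α⁻¹) ^ α :=
          (Real.rpow_inv_rpow (by linarith) (ne_of_gt hα)).symm
      _ ≤ (x - 1) ^ α :=
          Real.rpow_le_rpow (Real.rpow_nonneg (by linarith) _) h1 (le_of_lt hα)
  have hG : (2 * r + 1) * Real.Gamma x ≤ Real.Gamma (x + α) :=
    le_trans (mul_le_mul_of_nonneg_right hpow hΓx.le) (gamma_lower α x hα hx2)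
  have hxa : α * (n + 1 : ℕ) + β = x + α := by push_cast; ring
  rw [hxa, abs_of_pos hΓxa, abs_of_pos hΓx, Real.norm_eq_abs, Real.norm_eq_abs,
    abs_of_nonneg (by positivity), abs_of_nonneg (by positivity)]
  have h12 : (1 : ℝ) / 2 * (r ^ n / Real.Gamma x) = r ^ n / (2 * Real.Gamma x) := by
    field_simp
  rw [h12, div_le_div_iff₀ hΓxa (by positivity)]
  have hpn : (0 : ℝ) ≤ r ^ n := pow_nonneg hr n
  have hps : r ^ (n + 1) = r ^ n * r := pow_succ r n
  nlinarith [mul_le_mul_of_nonneg_left hG hpn]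

/-- rpow bound on a fixed interval. -/
lemma rpow_le_exp_abs (z y q : ℝ) (hz : 0 < z) (hy1 : z / 2 < y) (hy2 : y < 2 * z) :
    y ^ q ≤ Real.exp (|q| * (|Real.log (z / 2)| + |Real.log (2 * z)|)) := by
  set L : ℝ := |Real.log (z / 2)| + |Real.log (2 * z)|
  have hy0 : 0 < y := lt_trans (by positivity) hy1
  rw [Real.rpow_def_of_pos hy0]
  apply Real.exp_le_exp.mpr
  have h1 : Real.log (z / 2) ≤ Real.log y := Real.log_le_log (by positivity) hy1.le
  have h2 : Real.log y ≤ Real.log (2 * z) := Real.log_le_log hy0 hy2.le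
  have hlog : |Real.log y| ≤ L := by
    rw [abs_le]
    constructor
    · have := neg_abs_le (Real.log (z / 2))
      have := abs_nonneg (Real.log (2 * z))
      simp only [L]; linarith
    · have := le_abs_self (Real.log (2 * z))
      have := abs_nonneg (Real.log (z / 2))
      simp only [L]; linarith
  calc Real.log y * q ≤ |Real.log y * q| := le_abs_self _
    _ = |Real.log y| * |q| := abs_mul _ _
    _ ≤ L * |q| := mul_le_mul_of_nonneg_right hlog (abs_nonneg q)
    _ = |q| * L := mul_comm _ _

theorem deriv_rpow_mul_mittagLeffler (α k lam : ℝ) (hα : 0 < α) (hk : k ≠ 1)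
    (z : ℝ) (hz : 0 < z) :
    HasDerivAt (fun z : ℝ => z ^ (k - 1) * mittagLeffler α k (lam * z ^ α))
      (z ^ (k - 2) * mittagLeffler α (k - 1) (lam * z ^ α)) z := by
  set L : ℝ := |Real.log (z / 2)| + |Real.log (2 * z)| with hLdef
  have hL0 : 0 ≤ L := by positivity
  set r : ℝ := 2 * |lam| * Real.exp (α * L) with hrdef
  have hr0 : 0 ≤ r := by positivity
  set C : ℝ := (α + |k - 1|) * Real.exp (|k - 2| * L) with hCdef
  set g : ℕ → ℝ → ℝ := fun n y => lam ^ n * y ^ (α * n + k - 1) / Real.Gamma (α * n + k)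
    with hgdef
  set g' : ℕ → ℝ → ℝ :=
    fun n y => lam ^ n * ((α * n + k - 1) * y ^ (α * n + k - 2)) / Real.Gamma (α * n + k)
    with hg'def
  set t : Set ℝ := Set.Ioo (z / 2) (2 * z) with htdef
  have hzt : z ∈ t := ⟨by linarith, by linarith⟩
  have hypos : ∀ y ∈ t, (0 : ℝ) < y := fun y hy => lt_trans (by positivity) hy.1
  -- bound on n: (n : ℝ) ≤ 2^n and 1 ≤ 2^n
  have hn2 : ∀ n : ℕ, (n : ℝ) ≤ 2 ^ n := fun n => by
    exact_mod_cast (Nat.lt_two_pow_self (n := n)).le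
  have h12 : ∀ n : ℕ, (1 : ℝ) ≤ 2 ^ n := fun n => one_le_pow₀ (by norm_num)
  -- derivative of each term
  have hg : ∀ (n : ℕ), ∀ y ∈ t, HasDerivAt (g n) (g' n y) y := by
    intro n y hy
    have hy0 : (0 : ℝ) < y := hypos y hy
    have h := Real.hasDerivAt_rpow_const (x := y) (p := α * n + k - 1) (Or.inl (ne_of_gt hy0))
    have h2 := (h.const_mul (lam ^ n)).div_const (Real.Gamma (α * n + k))
    have he : α * n + k - 1 - 1 = α * n + k - 2 := by ring
    rw [he] at h2
    exact h2
  -- uniform bound for derivatives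
  have hbound : ∀ (n : ℕ), ∀ y ∈ t, ‖g' n y‖ ≤ C * r ^ n / |Real.Gamma (α * n + k)| := by
    intro n y hy
    have hy0 : (0 : ℝ) < y := hypos y hy
    rw [hg'def, Real.norm_eq_abs, abs_div]
    have hnum : |lam ^ n * ((α * n + k - 1) * y ^ (α * n + k - 2))| ≤ C * r ^ n := by
      rw [abs_mul, abs_mul, abs_pow, abs_of_pos (Real.rpow_pos_of_pos hy0 _)]
      have hq1 : |α * n + k - 1| ≤ (α + |k - 1|) * 2 ^ n := by
        have h1 : |α * n + k - 1| ≤ α * n + |k - 1| := by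
          have : α * n + k - 1 = α * n + (k - 1) := by ring
          rw [this]
          calc |α * n + (k - 1)| ≤ |α * (n : ℝ)| + |k - 1| := abs_add_le _ _
            _ = α * n + |k - 1| := by rw [abs_of_nonneg (by positivity)]
        have h2 := hn2 n
        have h3 := h12 n
        nlinarith [abs_nonneg (k - 1), hα.le]
      have hq2 : y ^ (α * n + k - 2) ≤ Real.exp (α * L) ^ n * Real.exp (|k - 2| * L) := by
        calc y ^ (α * n + k - 2) ≤ Real.exp (|α * n + k - 2| * L) :=
              rpow_le_exp_abs z y _ hz hy.1 hy.2
          _ ≤ Real.exp ((α * n + |k - 2|) * L) := by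
              apply Real.exp_le_exp.mpr
              apply mul_le_mul_of_nonneg_right _ hL0
              have : α * n + k - 2 = α * n + (k - 2) := by ring
              rw [this]
              calc |α * (n : ℝ) + (k - 2)| ≤ |α * (n : ℝ)| + |k - 2| := abs_add_le _ _
                _ = α * n + |k - 2| := by rw [abs_of_nonneg (by positivity)]
          _ = Real.exp (α * L) ^ n * Real.exp (|k - 2| * L) := by
              rw [← Real.exp_nat_mul, ← Real.exp_add]
              ring_nf
      calc |lam| ^ n * (|α * n + k - 1| * y ^ (α * n + k - 2))
          ≤ |lam| ^ n * (((α + |k - 1|) * 2 ^ n) * (Real.exp (α * L) ^ n * Real.exp (|k - 2| * L))) := by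
            apply mul_le_mul_of_nonneg_left _ (pow_nonneg (abs_nonneg _) n)
            exact mul_le_mul hq1 hq2 (le_of_lt (Real.rpow_pos_of_pos hy0 _)) (by positivity)
        _ = C * r ^ n := by
            rw [hCdef, hrdef, mul_pow, mul_pow]
            ring
    rcases eq_or_ne (Real.Gamma (α * n + k)) 0 with h | h
    · simp [h]
    · rw [div_le_div_iff₀ (abs_pos.mpr h) (abs_pos.mpr h)]
      exact mul_le_mul_of_nonneg_right hnum (abs_nonneg _)
  -- summability of the bound
  have hu : Summable (fun n : ℕ => C * r ^ n / |Real.Gamma (α * n + k)|) := by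
    have := (summable_aux α k r hα hr0).mul_left C
    simpa only [mul_div_assoc] using this
  -- summability at the point z
  have hg0 : Summable (fun n => g n z) := by
    apply Summable.of_norm_bounded ((summable_aux α k r hα hr0).mul_left (Real.exp (|k - 1| * L)))
    intro n
    rw [hgdef, Real.norm_eq_abs, abs_div, abs_mul, abs_pow,
      abs_of_pos (Real.rpow_pos_of_pos hz _)]
    rw [show Real.exp (|k - 1| * L) * (r ^ n / |Real.Gamma (α * n + k)|)
        = Real.exp (|k - 1| * L) * r ^ n / |Real.Gamma (α * n + k)| from
      (mul_div_assoc _ _ _).symm]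
    have hnum : |lam| ^ n * z ^ (α * n + k - 1) ≤ Real.exp (|k - 1| * L) * r ^ n := by
      have hzq : z ^ (α * n + k - 1) ≤ Real.exp (α * L) ^ n * Real.exp (|k - 1| * L) := by
        calc z ^ (α * n + k - 1) ≤ Real.exp (|α * n + k - 1| * L) :=
              rpow_le_exp_abs z z _ hz (by linarith) (by linarith)
          _ ≤ Real.exp ((α * n + |k - 1|) * L) := by
              apply Real.exp_le_exp.mpr
              apply mul_le_mul_of_nonneg_right _ hL0
              have : α * n + k - 1 = α * n + (k - 1) := by ring
              rw [this]
              calc |α * (n : ℝ) + (k - 1)| ≤ |α * (n : ℝ)| + |k - 1| := abs_add_le _ _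
                _ = α * n + |k - 1| := by rw [abs_of_nonneg (by positivity)]
          _ = Real.exp (α * L) ^ n * Real.exp (|k - 1| * L) := by
              rw [← Real.exp_nat_mul, ← Real.exp_add]
              ring_nf
      calc |lam| ^ n * z ^ (α * n + k - 1)
          ≤ |lam| ^ n * (Real.exp (α * L) ^ n * Real.exp (|k - 1| * L)) := by
            apply mul_le_mul_of_nonneg_left hzq (pow_nonneg (abs_nonneg _) n)
        _ ≤ Real.exp (|k - 1| * L) * r ^ n := by
            rw [hrdef, mul_pow, mul_pow]
            have h2n := h12 n
            have hpos1 : (0:ℝ) ≤ |lam| ^ n * Real.exp (α * L) ^ n := by positivity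
            nlinarith [mul_le_mul_of_nonneg_right (le_mul_of_one_le_left hpos1 h2n)
              (Real.exp_pos (|k - 1| * L)).le]
    rcases eq_or_ne (Real.Gamma (α * n + k)) 0 with h | h
    · simp [h]
    · rw [div_le_div_iff₀ (abs_pos.mpr h) (abs_pos.mpr h)]
      exact mul_le_mul_of_nonneg_right hnum (abs_nonneg _)
  -- termwise differentiation
  have H : HasDerivAt (fun w => ∑' n, g n w) (∑' n, g' n z) z :=
    hasDerivAt_tsum_of_isPreconnected hu isOpen_Ioo isPreconnected_Ioo
      (fun n y hy => hg n y hy) (fun n y hy => hbound n y hy) hzt hg0 hzt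
  -- the sum of g coincides with our function near z
  have heq : (fun y : ℝ => y ^ (k - 1) * mittagLeffler α k (lam * y ^ α)) =ᶠ[nhds z]
      fun w => ∑' n, g n w := by
    filter_upwards [isOpen_Ioo.mem_nhds hzt] with y hy
    have hy0 : (0 : ℝ) < y := hypos y hy
    rw [mittagLeffler, ← tsum_mul_left]
    apply tsum_congr
    intro n
    simp only [hgdef]
    rw [mul_pow, ← Real.rpow_natCast (y ^ α) n, ← Real.rpow_mul hy0.le]
    rw [show α * (n : ℝ) + k - 1 = α * n + (k - 1) by ring, Real.rpow_add hy0]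
    ring
  -- identify the derivative with the claimed formula
  have hfinal : ∑' n, g' n z = z ^ (k - 2) * mittagLeffler α (k - 1) (lam * z ^ α) := by
    rw [mittagLeffler, ← tsum_mul_left]
    apply tsum_congr
    intro n
    simp only [hg'def]
    rw [mul_pow, ← Real.rpow_natCast (z ^ α) n, ← Real.rpow_mul hz.le]
    rw [show α * (n : ℝ) + (k - 1) = (α * n + k) - 1 by ring]
    have hΓ := gammaRatio (α * n + k)
    rw [show lam ^ n * ((α * n + k - 1) * z ^ (α * n + k - 2)) / Real.Gamma (α * n + k)
        = lam ^ n * z ^ (α * n + k - 2) * ((α * n + k - 1) / Real.Gamma (α * n + k)) by ring]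
    rw [hΓ]
    rw [show α * (n : ℝ) + k - 2 = α * n + (k - 2) by ring, Real.rpow_add hz]
    rw [show (k : ℝ) - 2 = (k - 2) by ring]
    field_simp
  rw [← hfinal]
  exact H.congr_of_eventuallyEq heq
end
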